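/- Let p be a prime not dividing the positive integer m. Writing Φ_{mp}(z) = ∑_{k=0}^{(p-1)φ(m)} a_{mp}(k) z^{(p-1)φ(m)-k} and Φ_m(z) = ∑_{s=0}^{φ(m)} a_m(s) z^{φ(m)-s}, one has for every k ∈ {0,1,...,(p-1)φ(m)}: a_{mp}(k) = ∑_{s=0}^{⌊k/p⌋} a_m(s) · H_{k-sp}(ζ*_m), where H_r(ζ*_m) denotes the complete homogeneous symmetric polynomial of degree r evaluated at the primitive m-th roots of unity. -/

import Mathlib

open Polynomial

/-- The complete homogeneous symmetric polynomial of degree `r`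
evaluated at the entries of a list. -/
noncomputable def hsymmEval : List ℂ → ℕ → ℂ
  | _, 0 => 1
  | [], _ + 1 => 0
  | x :: xs, r + 1 => x * hsymmEval (x :: xs) r + hsymmEval xs (r + 1)
  termination_by l r => (r, l.length)

/-- The list of the `φ(m)` primitive `m`-th roots of unity. -/
noncomputable def primRoots (m : ℕ) : List ℂ :=
  ((List.range m).filter (fun j => Nat.gcd (j + 1) m = 1)).map
    (fun j => Complex.exp (2 * (Real.pi : ℂ) * Complex.I * (j + 1 : ℕ) / (m : ℂ)))

/-- The list of the non-primitive `m`-th roots of unity. -/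
noncomputable def nonPrimRoots (m : ℕ) : List ℂ :=
  ((List.range m).filter (fun j => 1 < Nat.gcd (j + 1) m)).map
    (fun j => Complex.exp (2 * (Real.pi : ℂ) * Complex.I * (j + 1 : ℕ) / (m : ℂ)))

lemma hsymm_step (x : ℂ) (xs : List ℂ) :
    (1 - PowerSeries.C x * PowerSeries.X) * PowerSeries.mk (hsymmEval (x :: xs)) =
      PowerSeries.mk (hsymmEval xs) := by
  ext n
  rw [sub_mul, one_mul, map_sub, mul_assoc, PowerSeries.coeff_C_mul]
  cases n with
  | zero => simp [hsymmEval, PowerSeries.coeff_zero_X_mul]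
  | succ n =>
    rw [PowerSeries.coeff_succ_X_mul, PowerSeries.coeff_mk, PowerSeries.coeff_mk,
      PowerSeries.coeff_mk]
    rw [show hsymmEval (x :: xs) (n+1) = x * hsymmEval (x :: xs) n + hsymmEval xs (n+1) by
      simp [hsymmEval]]
    ring

lemma hsymm_inv (L : List ℂ) :
    (L.map (fun x => 1 - PowerSeries.C x * PowerSeries.X)).prod *
      PowerSeries.mk (hsymmEval L) = 1 := by
  induction L with
  | nil =>
    have : PowerSeries.mk (hsymmEval []) = (1 : PowerSeries ℂ) := by
      ext n; cases n <;> simp [hsymmEval, PowerSeries.coeff_one]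
    simp [this]
  | cons x xs ih =>
    rw [List.map_cons, List.prod_cons, mul_comm (1 - PowerSeries.C x * PowerSeries.X),
      mul_assoc, hsymm_step, ih]

lemma primRoots_mem_prim {m : ℕ} (hm : 1 ≤ m) {z : ℂ} (hz : z ∈ primRoots m) :
    IsPrimitiveRoot z m := by
  simp only [primRoots, List.mem_map, List.mem_filter, List.mem_range] at hz
  obtain ⟨j, ⟨hj, hgcd⟩, rfl⟩ := hz
  have := Complex.isPrimitiveRoot_exp_of_coprime (j+1) m (by omega)
    (by simpa [Nat.Coprime] using of_decide_eq_true hgcd)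
  convert this using 2
  push_cast
  ring

lemma primRoots_nodup {m : ℕ} (hm : 1 ≤ m) : (primRoots m).Nodup := by
  apply List.Nodup.map_on _ (List.nodup_range.filter _)
  intro j₁ h₁ j₂ h₂ h
  simp only [List.mem_filter, List.mem_range] at h₁ h₂
  rw [Complex.exp_eq_exp_iff_exists_int] at h
  obtain ⟨n, hn⟩ := h
  have h2pi : (2 * (Real.pi : ℂ) * Complex.I) ≠ 0 := by
    simp [Real.pi_ne_zero, Complex.I_ne_zero, Complex.ofReal_ne_zero]
  have hm0 : (m : ℂ) ≠ 0 := by exact_mod_cast (by omega : m ≠ 0)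
  have key : ((j₁ : ℂ) + 1) = ((j₂ : ℂ) + 1) + n * m := by
    field_simp at hn
    
    have h' : (2 * (Real.pi : ℂ) * Complex.I) * ((j₁ : ℂ) + 1) =
        (2 * (Real.pi : ℂ) * Complex.I) * (((j₂ : ℂ) + 1) + n * m) := by
      push_cast at hn
      linear_combination (2 * (Real.pi : ℂ) * Complex.I) * hn
    exact mul_left_cancel₀ h2pi h'
  have key' : (j₁ : ℤ) + 1 = (j₂ : ℤ) + 1 + n * m := by exact_mod_cast key
  have hj₁ : (j₁ : ℤ) < m := by exact_mod_cast h₁.1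
  have hj₂ : (j₂ : ℤ) < m := by exact_mod_cast h₂.1
  have hm1 : (1 : ℤ) ≤ m := by exact_mod_cast hm
  have hn0 : n = 0 := by
    rcases lt_trichotomy n 0 with h | h | h
    · nlinarith
    · exact h
    · nlinarith
  subst hn0
  simp at key'
  omega

lemma filter_card (m : ℕ) (hm : 1 ≤ m) :
    ((List.range m).filter (fun j => Nat.gcd (j + 1) m = 1)).length = m.totient := by
  have hcard : (((List.range m).filter (fun j => Nat.gcd (j + 1) m = 1))).length =
      ((Finset.range m).filter (fun j => Nat.gcd (j + 1) m = 1)).card := rfl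
  rw [hcard, Nat.totient]
  rcases eq_or_lt_of_le hm with h1 | h1
  · subst h1; decide
  · refine Finset.card_bij' (fun j _ => j + 1) (fun i _ => i - 1) ?_ ?_ ?_ ?_
    · intro a ha
      simp only [Finset.mem_filter, Finset.mem_range] at ha ⊢
      have : a + 1 ≠ m := by
        intro h; rw [h, Nat.gcd_self] at ha; omega
      exact ⟨by omega, by rw [Nat.Coprime, Nat.gcd_comm]; exact ha.2⟩
    · intro i hi
      simp only [Finset.mem_filter, Finset.mem_range] at hi ⊢
      have hi0 : i ≠ 0 := by
        intro h; rw [h] at hi; simp [Nat.Coprime] at hi; omega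
      refine ⟨by omega, ?_⟩
      rw [Nat.sub_add_cancel (by omega)]
      rw [Nat.gcd_comm]; exact hi.2
    · intro a _; simp
    · intro i hi
      simp only [Finset.mem_filter, Finset.mem_range] at hi
      have hi0 : i ≠ 0 := by
        intro h; rw [h] at hi; simp [Nat.Coprime] at hi; omega
      omega

lemma primRoots_length {m : ℕ} (hm : 1 ≤ m) : (primRoots m).length = m.totient := by
  rw [primRoots, List.length_map]
  exact filter_card m hm

lemma primRoots_multiset {m : ℕ} (hm : 1 ≤ m) :
    ((primRoots m : Multiset ℂ)) = (primitiveRoots m ℂ).val := by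
  apply Multiset.eq_of_le_of_card_le
  · rw [Multiset.le_iff_subset (by exact_mod_cast primRoots_nodup hm)]
    intro z hz
    rw [Multiset.mem_coe] at hz
    have := primRoots_mem_prim hm hz
    exact (mem_primitiveRoots (by omega)).mpr this
  · rw [Multiset.coe_card, primRoots_length hm]
    exact le_of_eq (Complex.card_primitiveRoots m ▸ rfl)

lemma cyclotomic_eq_prim_prod {m : ℕ} (hm : 1 ≤ m) :
    cyclotomic m ℂ = ((primRoots m).map (fun ζ => X - C ζ)).prod := by
  rw [cyclotomic_eq_prod_X_sub_primitiveRoots (Complex.isPrimitiveRoot_exp m (by omega)),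
    Finset.prod_eq_multiset_prod, ← primRoots_multiset hm]
  simp

lemma reverse_X_sub_C (ζ : ℂ) : (X - C ζ).reverse = 1 - C ζ * X := by
  ext n
  rw [coeff_reverse, natDegree_X_sub_C]
  rcases n with _ | _ | n
  · rw [revAt_le (by norm_num)]
    simp
  · rw [revAt_le (by norm_num)]
    simp [coeff_one]
  · rw [revAt_eq_self_of_lt (by omega)]
    simp [coeff_X, coeff_one]

lemma reverse_list_prod (L : List (Polynomial ℂ)) :
    (L.prod).reverse = (L.map Polynomial.reverse).prod := by
  induction L with
  | nil => simpa using (by rw [← C_1, reverse_C] : (1 : Polynomial ℂ).reverse = 1)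
  | cons f fs ih => rw [List.prod_cons, reverse_mul_of_domain, ih, List.map_cons, List.prod_cons]

lemma reverse_expand (p : ℕ) (hp : 0 < p) (f : Polynomial ℂ) :
    (expand ℂ p f).reverse = expand ℂ p f.reverse := by
  have hNp : p ∣ f.natDegree * p := dvd_mul_left p f.natDegree
  ext n
  rw [coeff_reverse, natDegree_expand, coeff_expand hp, coeff_expand hp f.reverse]
  by_cases hn : n ≤ f.natDegree * p
  · rw [revAt_le hn]
    by_cases hd : p ∣ n
    · have hd2 : p ∣ f.natDegree * p - n := Nat.dvd_sub hNp hd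
      rw [if_pos hd2, if_pos hd, coeff_reverse]
      congr 1
      obtain ⟨s, rfl⟩ := hd
      have hs : s ≤ f.natDegree := by
        by_contra h
        have : f.natDegree * p < p * s := by nlinarith
        omega
      rw [Nat.mul_div_cancel_left s hp, revAt_le hs,
        show f.natDegree * p - p * s = (f.natDegree - s) * p by
          rw [Nat.sub_mul, Nat.mul_comm p s]]
      exact Nat.mul_div_cancel _ hp
    · have hd2 : ¬ p ∣ f.natDegree * p - n := by
        intro h
        apply hd
        have := Nat.dvd_sub hNp h
        rwa [Nat.sub_sub_self hn] at this
      rw [if_neg hd2, if_neg hd]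
  · rw [revAt_eq_self_of_lt (by omega)]
    by_cases hd : p ∣ n
    · rw [if_pos hd, if_pos hd]
      obtain ⟨s, rfl⟩ := hd
      rw [Nat.mul_div_cancel_left s hp]
      have hs : f.natDegree < s := by
        by_contra h
        push_neg at h
        have : p * s ≤ f.natDegree * p := by
          calc p * s = s * p := Nat.mul_comm p s
          _ ≤ f.natDegree * p := Nat.mul_le_mul_right p h
        omega
      rw [coeff_eq_zero_of_natDegree_lt (by omega),
        coeff_eq_zero_of_natDegree_lt (lt_of_le_of_lt f.reverse_natDegree_le hs)]
    · rw [if_neg hd, if_neg hd]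

lemma coe_prod_lin (L : List ℂ) :
    (((L.map (fun ζ => 1 - C ζ * X)).prod : Polynomial ℂ) : PowerSeries ℂ) =
      (L.map (fun x => 1 - PowerSeries.C x * PowerSeries.X)).prod := by
  induction L with
  | nil => simp
  | cons x xs ih =>
    simp only [List.map_cons, List.prod_cons, Polynomial.coe_mul, Polynomial.coe_sub,
      Polynomial.coe_one, Polynomial.coe_C, Polynomial.coe_X, ih]

theorem cyclotomic_coeff_recursion (m p : ℕ) (hp : p.Prime) (hpm : ¬ p ∣ m)
    (hm : 1 ≤ m) :
    ∀ k ≤ (p - 1) * m.totient,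
      (Polynomial.cyclotomic (m * p) ℂ).coeff ((p - 1) * m.totient - k) =
        ∑ s ∈ Finset.range (k / p + 1),
          (Polynomial.cyclotomic m ℂ).coeff (m.totient - s) *
            hsymmEval (primRoots m) (k - s * p) := by
  intro k hk
  have hp0 : 0 < p := hp.pos
  set t := m.totient with ht
  have ht1 : 1 ≤ t := Nat.totient_pos.mpr (by omega)
  set Φm := cyclotomic m ℂ
  set Φmp := cyclotomic (m * p) ℂ
  -- degree facts
  have hcop : m.Coprime p := ((hp.coprime_iff_not_dvd).mpr hpm).symm
  have hdeg : Φmp.natDegree = (p - 1) * t := by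
    rw [natDegree_cyclotomic, Nat.totient_mul hcop, Nat.totient_prime hp, Nat.mul_comm]
  have hdegm : Φm.natDegree = t := natDegree_cyclotomic m ℂ
  -- the fundamental identity
  have h1 : expand ℂ p Φm = Φmp * Φm := cyclotomic_expand_eq_cyclotomic_mul hp hpm ℂ
  have h2 : (expand ℂ p Φm).reverse = Φmp.reverse * Φm.reverse := by
    rw [h1, reverse_mul_of_domain]
  have h3 : Φm.reverse = ((primRoots m).map (fun ζ => 1 - C ζ * X)).prod := by
    rw [show Φm = cyclotomic m ℂ from rfl, cyclotomic_eq_prim_prod hm, reverse_list_prod,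
      List.map_map]
    congr 1
    apply List.map_congr_left
    intro ζ _
    exact reverse_X_sub_C ζ
  have h4 : ((Φm.reverse : Polynomial ℂ) : PowerSeries ℂ) *
      PowerSeries.mk (hsymmEval (primRoots m)) = 1 := by
    rw [h3, coe_prod_lin]
    exact hsymm_inv (primRoots m)
  have h5 : ((Φmp.reverse : Polynomial ℂ) : PowerSeries ℂ) =
      ((expand ℂ p Φm.reverse : Polynomial ℂ) : PowerSeries ℂ) *
        PowerSeries.mk (hsymmEval (primRoots m)) := by
    rw [← reverse_expand p hp0, h2, Polynomial.coe_mul, mul_assoc, h4, mul_one]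
  -- take coefficient k
  have h6 := congrArg (PowerSeries.coeff k) h5
  rw [Polynomial.coeff_coe, coeff_reverse, hdeg, revAt_le hk, PowerSeries.coeff_mul] at h6
  rw [h6, Finset.Nat.sum_antidiagonal_eq_sum_range_succ_mk]
  have hF : ∀ i, (PowerSeries.coeff i) ((expand ℂ p Φm.reverse : Polynomial ℂ) : PowerSeries ℂ) =
      if p ∣ i then Φm.reverse.coeff (i / p) else 0 := by
    intro i; rw [Polynomial.coeff_coe, coeff_expand hp0]
  simp only [hF, PowerSeries.coeff_mk]
  have hkpt : k / p ≤ t := by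
    have h1 : k / p ≤ ((p - 1) * t) / p := Nat.div_le_div_right hk
    have h2 : (p - 1) * t ≤ p * t := Nat.mul_le_mul_right t (by omega)
    have h3 : ((p - 1) * t) / p ≤ (p * t) / p := Nat.div_le_div_right h2
    rw [Nat.mul_div_cancel_left t hp0] at h3
    omega
  have himg : (Finset.range (k + 1)).filter (fun i => p ∣ i) =
      (Finset.range (k / p + 1)).image (· * p) := by
    ext i
    simp only [Finset.mem_filter, Finset.mem_range, Finset.mem_image]
    constructor
    · rintro ⟨hik, s, rfl⟩
      refine ⟨s, ?_, (Nat.mul_comm p s).symm⟩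
      rw [Nat.lt_succ_iff, Nat.le_div_iff_mul_le hp0, Nat.mul_comm]
      omega
    · rintro ⟨s, hs, rfl⟩
      rw [Nat.lt_succ_iff] at hs
      constructor
      · have := Nat.div_mul_le_self k p
        have : s * p ≤ (k / p) * p := Nat.mul_le_mul_right p hs
        omega
      · exact dvd_mul_left p s
  have hzero : ∀ i ∈ Finset.range (k + 1),
      (if p ∣ i then Φm.reverse.coeff (i / p) else 0) * hsymmEval (primRoots m) (k - i) ≠ 0 →
      p ∣ i := by
    intro i _ hne
    by_contra hdvd
    rw [if_neg hdvd, zero_mul] at hne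
    exact hne rfl
  rw [← Finset.sum_filter_of_ne hzero, himg,
    Finset.sum_image (fun a _ b _ hab => Nat.eq_of_mul_eq_mul_right hp0 hab)]
  apply Finset.sum_congr rfl
  intro s hs
  rw [Finset.mem_range, Nat.lt_succ_iff] at hs
  rw [if_pos (dvd_mul_left p s), Nat.mul_div_cancel s hp0, coeff_reverse, hdegm,
    revAt_le (le_trans hs hkpt)]
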